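/- Let p ≥ 2 and let x₁, …, x_p be vectors in ℝⁿ, each of norm 1, such that |⟨xᵢ, x₁⟩| > √2/2 for every i = 2, …, p. Define ε_j = 1 if ⟨x₁, x_j⟩ ≥ 0 and ε_j = −1 otherwise (so ε₁ = 1). Then for every pair i ≠ j one has εᵢ ε_j ⟨xᵢ, x_j⟩ > 0; that is, the explicit sign choice sgn(⟨x₁, x_j⟩) produces an all-positive-correlations arrangement x₁, sgn(⟨x₁,x₂⟩)x₂, …, sgn(⟨x₁,x_p⟩)x_p. -/

import Mathlib

lemma key_apc {E : Type*} [NormedAddCommGroup E] [InnerProductSpace ℝ E]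
    (e y z : E) (he : ‖e‖ = 1) (hy : ‖y‖ = 1) (hz : ‖z‖ = 1)
    (ha : Real.sqrt 2 / 2 < (inner ℝ e y : ℝ)) (hb : Real.sqrt 2 / 2 < (inner ℝ e z : ℝ)) :
    (0 : ℝ) < (inner ℝ y z : ℝ) := by
  have hs : (Real.sqrt 2 / 2) ^ 2 = 1 / 2 := by
    rw [div_pow, Real.sq_sqrt (by norm_num : (2:ℝ) ≥ 0)]; norm_num
  have hpos : (0:ℝ) < Real.sqrt 2 / 2 := by positivity
  have ha0 : 0 < (inner ℝ e y : ℝ) := lt_trans hpos ha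
  have hb0 : 0 < (inner ℝ e z : ℝ) := lt_trans hpos hb
  have ha2 : 1 / 2 < (inner ℝ e y : ℝ) ^ 2 := by
    rw [← hs]; exact pow_lt_pow_left₀ ha (le_of_lt hpos) (by norm_num)
  have hb2 : 1 / 2 < (inner ℝ e z : ℝ) ^ 2 := by
    rw [← hs]; exact pow_lt_pow_left₀ hb (le_of_lt hpos) (by norm_num)
  have hu : ‖y - (inner ℝ e y : ℝ) • e‖ ^ 2 = 1 - (inner ℝ e y : ℝ) ^ 2 := by
    rw [@norm_sub_sq_real, norm_smul, real_inner_smul_right, real_inner_comm y e, hy, he,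
      Real.norm_eq_abs, mul_one, sq_abs]
    ring
  have hv : ‖z - (inner ℝ e z : ℝ) • e‖ ^ 2 = 1 - (inner ℝ e z : ℝ) ^ 2 := by
    rw [@norm_sub_sq_real, norm_smul, real_inner_smul_right, real_inner_comm z e, hz, he,
      Real.norm_eq_abs, mul_one, sq_abs]
    ring
  have hiner : (inner ℝ (y - (inner ℝ e y : ℝ) • e) (z - (inner ℝ e z : ℝ) • e) : ℝ)
      = (inner ℝ y z : ℝ) - (inner ℝ e y : ℝ) * (inner ℝ e z : ℝ) := by
    rw [inner_sub_left, inner_sub_right, inner_sub_right, real_inner_smul_left,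
      real_inner_smul_left, real_inner_smul_right, real_inner_smul_right,
      real_inner_comm y e, real_inner_self_eq_norm_sq, he]
    ring
  have hcs : |(inner ℝ (y - (inner ℝ e y : ℝ) • e) (z - (inner ℝ e z : ℝ) • e) : ℝ)|
      ≤ ‖y - (inner ℝ e y : ℝ) • e‖ * ‖z - (inner ℝ e z : ℝ) • e‖ :=
    abs_real_inner_le_norm _ _
  have hnn : ‖y - (inner ℝ e y : ℝ) • e‖ * ‖z - (inner ℝ e z : ℝ) • e‖
      < (inner ℝ e y : ℝ) * (inner ℝ e z : ℝ) := by
    have h1 : (‖y - (inner ℝ e y : ℝ) • e‖ * ‖z - (inner ℝ e z : ℝ) • e‖) ^ 2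
        < ((inner ℝ e y : ℝ) * (inner ℝ e z : ℝ)) ^ 2 := by
      rw [mul_pow, hu, hv, mul_pow]
      nlinarith [sq_nonneg ‖y - (inner ℝ e y : ℝ) • e‖, sq_nonneg ‖z - (inner ℝ e z : ℝ) • e‖,
        hu, hv]
    exact lt_of_pow_lt_pow_left₀ 2 (le_of_lt (mul_pos ha0 hb0)) h1
  rw [hiner] at hcs
  have h2 := (abs_le.mp hcs).1
  linarith

/-- With the explicit sign choice `ε j = sgn ⟨x₁, x_j⟩` (and `ε₁ = 1`),
the vectors `ε j • x j` form an all-positive-correlations arrangement: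
`ε i * ε j * ⟨xᵢ, x_j⟩ > 0` for all `i ≠ j`. -/
theorem apc_arrangement_explicit (n p : ℕ) (hp : 2 ≤ p)
    (x : Fin p → EuclideanSpace ℝ (Fin n))
    (hnorm : ∀ i, ‖x i‖ = 1)
    (hcorr : ∀ i : Fin p, i ≠ ⟨0, by omega⟩ →
      |(inner ℝ (x i) (x ⟨0, by omega⟩) : ℝ)| > Real.sqrt 2 / 2)
    (ε : Fin p → ℝ)
    (hε : ∀ j : Fin p,
      ε j = if (0 : ℝ) ≤ (inner ℝ (x ⟨0, by omega⟩) (x j) : ℝ) then 1 else -1) :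
    ∀ i j : Fin p, i ≠ j → (0 : ℝ) < ε i * ε j * (inner ℝ (x i) (x j) : ℝ) := by
  set e0 : Fin p := ⟨0, by omega⟩ with he0
  have hsqrt2 : Real.sqrt 2 < 2 := by
    nlinarith [Real.sq_sqrt (by norm_num : (2:ℝ) ≥ 0), Real.sqrt_nonneg 2]
  have hεpm : ∀ i : Fin p, ε i = 1 ∨ ε i = -1 := by
    intro i; rw [hε i]; split <;> simp
  have hεabs : ∀ i : Fin p, |ε i| = 1 := by
    intro i; rcases hεpm i with h | h <;> simp [h]
  have hkey : ∀ i : Fin p, Real.sqrt 2 / 2 < ε i * (inner ℝ (x e0) (x i) : ℝ) := by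
    intro i
    by_cases h : i = e0
    · rw [h]
      have h1 : (inner ℝ (x e0) (x e0) : ℝ) = 1 := by
        rw [real_inner_self_eq_norm_sq, hnorm]; norm_num
      rw [hε e0, h1]
      simp only [if_pos (by norm_num : (0:ℝ) ≤ 1)]
      linarith
    · have hc := hcorr i h
      rw [real_inner_comm (x e0) (x i)] at hc
      rw [hε i]
      split
      · rwa [one_mul, abs_of_nonneg (by assumption)] at *
      · rw [neg_one_mul]
        rw [abs_of_neg (by linarith [lt_of_not_ge (by assumption)])] at hc
        exact hc
  intro i j hij
  have h := key_apc (x e0) (ε i • x i) (ε j • x j) (hnorm e0) ?_ ?_ ?_ ?_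
  · rw [real_inner_smul_left, real_inner_smul_right] at h
    linarith [h]
  · rw [norm_smul, Real.norm_eq_abs, hεabs, hnorm, mul_one]
  · rw [norm_smul, Real.norm_eq_abs, hεabs, hnorm, mul_one]
  · rw [real_inner_smul_right]; exact hkey i
  · rw [real_inner_smul_right]; exact hkey j
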